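/- Let A be an arrangement of 12 distinct lines in P^2(C) all of whose multiple points have multiplicity at most 5. If η : A → F_2 is a non-constant 2-cocycle of A, then η takes each of the two values of F_2 on exactly 6 lines of A. -/

import Mathlib

open scoped Classical

noncomputable section

/-- The complex projective plane `P²(ℂ)`. -/
abbrev ProjPlane : Type := Projectivization ℂ (Fin 3 → ℂ)

/-- A subset of `P²(ℂ)` is a projective line if it is the zero locus of a nonzero
linear form. -/
def IsProjLine (S : Set ProjPlane) : Prop :=
  ∃ f : (Fin 3 → ℂ) →ₗ[ℂ] ℂ, f ≠ 0 ∧ S = {p : ProjPlane | f p.rep = 0}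

/-- The lines of the arrangement `A` passing through the point `p`. -/
def linesThrough (A : Finset (Set ProjPlane)) (p : ProjPlane) : Finset (Set ProjPlane) :=
  A.filter fun L => p ∈ L

/-- The multiplicity of a point `p` with respect to the arrangement `A`. -/
def mult (A : Finset (Set ProjPlane)) (p : ProjPlane) : ℕ :=
  (linesThrough A p).card

/-- `p` is a multiple point of the arrangement `A` (at least two lines pass through it). -/
def IsMultPoint (A : Finset (Set ProjPlane)) (p : ProjPlane) : Prop :=
  2 ≤ mult A p

/-- A `q`-cocycle of the line arrangement `A`: for every multiple point `p`,
if `q` divides the multiplicity then the values of `η` on the lines through `p` sum to `0`,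
and otherwise `η` is constant on the lines through `p`. -/
def IsCocycle (q : ℕ) (A : Finset (Set ProjPlane)) (η : Set ProjPlane → ZMod q) : Prop :=
  ∀ p : ProjPlane, IsMultPoint A p →
    ((q ∣ mult A p → ∑ L ∈ linesThrough A p, η L = 0) ∧
     (¬ q ∣ mult A p → ∀ L ∈ linesThrough A p, ∀ K ∈ linesThrough A p, η L = η K))

/-- A function on lines is non-constant on the arrangement `A`. -/
def NonConstant {α : Type*} (A : Finset (Set ProjPlane)) (η : Set ProjPlane → α) : Prop :=
  ∃ L ∈ A, ∃ K ∈ A, η L ≠ η K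

/-- A `(k,q)`-net structure on the line arrangement `A`, with classes `C 0, …, C (k-1)`:
the classes partition `A` into `k` classes of `q` lines each, and whenever two lines from
different classes meet, their intersection point lies on exactly one line of each class. -/
def IsNet (k q : ℕ) (A : Finset (Set ProjPlane)) (C : Fin k → Finset (Set ProjPlane)) : Prop :=
  (∀ L ∈ A, IsProjLine L) ∧
  A.card = k * q ∧
  (∀ i, (C i).card = q) ∧
  (∀ i j, i ≠ j → Disjoint (C i) (C j)) ∧
  (∀ i, C i ⊆ A) ∧
  (∀ L ∈ A, ∃ i, L ∈ C i) ∧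
  (∀ i j, i ≠ j → ∀ L ∈ C i, ∀ K ∈ C j, ∀ p : ProjPlane, p ∈ L → p ∈ K →
    ∀ m : Fin k, ∃! N, N ∈ C m ∧ p ∈ N)

/-- Lattice isomorphism of two line arrangements: a bijection between the lines such that
a subfamily of lines has a common point iff the image subfamily has a common point. -/
def LatticeIso (A B : Finset (Set ProjPlane)) : Prop :=
  ∃ φ : Set ProjPlane → Set ProjPlane, Set.BijOn φ ↑A ↑B ∧
    ∀ S : Finset (Set ProjPlane), S ⊆ A →
      ((∃ p : ProjPlane, ∀ L ∈ S, p ∈ L) ↔ ∃ p : ProjPlane, ∀ L ∈ S, p ∈ φ L)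

/-- The projective line with homogeneous equation `a·x + b·y + c·z = 0`. -/
def lineOf (a b c : ℂ) : Set ProjPlane :=
  {p : ProjPlane | a * p.rep 0 + b * p.rep 1 + c * p.rep 2 = 0}

lemma mem_mk_iff (f : (Fin 3 → ℂ) →ₗ[ℂ] ℂ) {v : Fin 3 → ℂ} (hv : v ≠ 0) :
    f (Projectivization.mk ℂ v hv).rep = 0 ↔ f v = 0 := by
  obtain ⟨a, ha⟩ := Projectivization.exists_smul_eq_mk_rep ℂ v hv
  rw [← ha, Units.smul_def, map_smul, smul_eq_mul, mul_eq_zero]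
  simp [Units.ne_zero]

lemma finrank_ker {f : (Fin 3 → ℂ) →ₗ[ℂ] ℂ} (hf : f ≠ 0) :
    Module.finrank ℂ (LinearMap.ker f) = 2 := by
  have h := LinearMap.finrank_range_add_finrank_ker f
  have hr : LinearMap.range f = ⊤ := by
    rw [LinearMap.range_eq_top]
    intro c
    obtain ⟨v, hv⟩ : ∃ v, f v ≠ 0 := by
      by_contra hcon
      push_neg at hcon
      exact hf (LinearMap.ext fun v => by simp [hcon v])
    exact ⟨(c / f v) • v, by rw [map_smul, smul_eq_mul, div_mul_cancel₀ c hv]⟩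
  have h3 : Module.finrank ℂ (Fin 3 → ℂ) = 3 := by simp
  rw [hr, finrank_top, Module.finrank_self, h3] at h
  omega

lemma ker_eq_of_set_eq {f g : (Fin 3 → ℂ) →ₗ[ℂ] ℂ}
    (h : {p : ProjPlane | f p.rep = 0} = {p : ProjPlane | g p.rep = 0}) :
    LinearMap.ker f = LinearMap.ker g := by
  ext v
  by_cases hv : v = 0
  · simp [hv]
  · have := Set.ext_iff.mp h (Projectivization.mk ℂ v hv)
    simp only [Set.mem_setOf_eq, mem_mk_iff _ hv] at this
    simpa using this

/-- Two distinct projective lines meet in exactly one point. -/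
lemma inter_unique {L K : Set ProjPlane} (hL : IsProjLine L) (hK : IsProjLine K)
    (hne : L ≠ K) : ∃! p : ProjPlane, p ∈ L ∧ p ∈ K := by
  obtain ⟨f, hf, rfl⟩ := hL
  obtain ⟨g, hg, rfl⟩ := hK
  have hker : LinearMap.ker f ≠ LinearMap.ker g := by
    intro h
    apply hne
    ext p
    simp only [Set.mem_setOf_eq, ← LinearMap.mem_ker, h]
  have hsum := Submodule.finrank_sup_add_finrank_inf_eq (LinearMap.ker f) (LinearMap.ker g)
  rw [finrank_ker hf, finrank_ker hg] at hsum
  have h3 : Module.finrank ℂ (Fin 3 → ℂ) = 3 := by simp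
  have hsup : Module.finrank ℂ ↥(LinearMap.ker f ⊔ LinearMap.ker g) ≤ 3 := by
    have hle := Submodule.finrank_le (LinearMap.ker f ⊔ LinearMap.ker g)
    rw [h3] at hle
    exact hle
  have hWle : Module.finrank ℂ ↥(LinearMap.ker f ⊓ LinearMap.ker g) ≤ 2 := by
    have hle := Submodule.finrank_mono (inf_le_left :
      LinearMap.ker f ⊓ LinearMap.ker g ≤ LinearMap.ker f)
    rw [finrank_ker hf] at hle
    exact hle
  have hW1 : Module.finrank ℂ ↥(LinearMap.ker f ⊓ LinearMap.ker g) = 1 := by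
    rcases Nat.lt_or_ge (Module.finrank ℂ ↥(LinearMap.ker f ⊓ LinearMap.ker g)) 2 with h2 | h2
    · omega
    · exfalso
      have he : LinearMap.ker f ⊓ LinearMap.ker g = LinearMap.ker f :=
        Submodule.eq_of_le_of_finrank_eq inf_le_left (by rw [finrank_ker hf]; omega)
      have he' : LinearMap.ker f ⊓ LinearMap.ker g = LinearMap.ker g :=
        Submodule.eq_of_le_of_finrank_eq inf_le_right (by rw [finrank_ker hg]; omega)
      exact hker (he ▸ he')
  obtain ⟨u, huW, hu0⟩ := Submodule.exists_mem_ne_zero_of_ne_bot (p := LinearMap.ker f ⊓ LinearMap.ker g)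
    (by intro hb; rw [hb] at hW1; simp [finrank_bot] at hW1)
  have hspanW : ∀ w : Fin 3 → ℂ, w ∈ LinearMap.ker f ⊓ LinearMap.ker g → w ≠ 0 →
      Submodule.span ℂ {w} = LinearMap.ker f ⊓ LinearMap.ker g := fun w hwW hw0 =>
    Submodule.eq_of_le_of_finrank_eq (by simpa using hwW)
      (by rw [finrank_span_singleton hw0, hW1])
  refine ⟨Projectivization.mk ℂ u hu0, ⟨?_, ?_⟩, ?_⟩
  · simp only [Set.mem_setOf_eq, mem_mk_iff _ hu0]
    exact (Submodule.mem_inf.mp huW).1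
  · simp only [Set.mem_setOf_eq, mem_mk_iff _ hu0]
    exact (Submodule.mem_inf.mp huW).2
  · rintro q ⟨hq1, hq2⟩
    have hqW : q.rep ∈ LinearMap.ker f ⊓ LinearMap.ker g := Submodule.mem_inf.mpr ⟨hq1, hq2⟩
    have hu' : u ∈ Submodule.span ℂ {q.rep} := by
      rw [hspanW q.rep hqW q.rep_nonzero]; exact huW
    obtain ⟨a, ha⟩ := Submodule.mem_span_singleton.mp hu'
    have ha0 : a ≠ 0 := by rintro rfl; rw [zero_smul] at ha; exact hu0 ha.symm
    rw [← q.mk_rep]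
    exact (Projectivization.mk_eq_mk_iff' ℂ _ _ q.rep_nonzero hu0).mpr ⟨a⁻¹, by
      rw [← ha, smul_smul, inv_mul_cancel₀ ha0, one_smul]⟩

lemma zmod2_cases : ∀ x : ZMod 2, x = 0 ∨ x = 1 := by decide
lemma zmod2_ne_iff : ∀ x w : ZMod 2, x ≠ w ↔ x = w + 1 := by decide
lemma zmod2_eq0_iff : ∀ x : ZMod 2, x = 0 ↔ ¬ x = 1 := by decide

lemma mixed_point (A : Finset (Set ProjPlane))
    (hmult : ∀ p : ProjPlane, IsMultPoint A p → mult A p ≤ 5)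
    (η : Set ProjPlane → ZMod 2) (hη : IsCocycle 2 A η)
    {p : ProjPlane} {L0 L1 : Set ProjPlane}
    (h0 : L0 ∈ linesThrough A p) (h1 : L1 ∈ linesThrough A p) (hne : η L0 ≠ η L1) :
    ∀ v : ZMod 2, ((linesThrough A p).filter fun L => η L = v).card = 2 := by
  have hL01 : L0 ≠ L1 := fun h => hne (by rw [h])
  have hmp : IsMultPoint A p := Finset.one_lt_card.mpr ⟨L0, h0, L1, h1, hL01⟩
  obtain ⟨hdiv, hconst⟩ := hη p hmp
  have hdvd : 2 ∣ mult A p := by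
    by_contra h
    exact hne (hconst h L0 h0 L1 h1)
  have hsum := hdiv hdvd
  set n1 := ((linesThrough A p).filter fun L => η L = 1).card with hn1
  set n0 := ((linesThrough A p).filter fun L => η L = 0).card with hn0
  have hflt : ((linesThrough A p).filter fun L => η L = 0) =
      ((linesThrough A p).filter fun L => ¬ η L = 1) :=
    Finset.filter_congr (fun x _ => zmod2_eq0_iff (η x))
  have hadd : n1 + n0 = mult A p := by
    rw [hn1, hn0, hflt, Finset.card_filter_add_card_filter_not
      (s := linesThrough A p) (fun L => η L = 1)]
    rfl
  have hsum1 : ∑ L ∈ linesThrough A p, η L = (n1 : ZMod 2) := by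
    rw [← Finset.sum_filter_add_sum_filter_not (linesThrough A p) (fun L => η L = 1) η]
    have e1 : ∑ L ∈ (linesThrough A p).filter (fun L => η L = 1), η L = (n1 : ZMod 2) := by
      rw [Finset.sum_congr rfl (fun L hL => (Finset.mem_filter.mp hL).2)]
      simp [hn1]
    have e2 : ∑ L ∈ (linesThrough A p).filter (fun L => ¬ η L = 1), η L = 0 := by
      apply Finset.sum_eq_zero
      intro L hL
      have := (Finset.mem_filter.mp hL).2
      rcases zmod2_cases (η L) with h | h
      · exact h
      · exact absurd h this
    rw [e1, e2, add_zero]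
  have hdvd1 : 2 ∣ n1 := by
    rw [hsum1] at hsum
    exact (ZMod.natCast_eq_zero_iff n1 2).mp hsum
  have hpos1 : 1 ≤ n1 := by
    rcases zmod2_cases (η L0) with h | h
    · have h1' : η L1 = 1 := by
        rcases zmod2_cases (η L1) with h' | h'
        · exact absurd (h.trans h'.symm) hne
        · exact h'
      exact Finset.card_pos.mpr ⟨L1, Finset.mem_filter.mpr ⟨h1, h1'⟩⟩
    · exact Finset.card_pos.mpr ⟨L0, Finset.mem_filter.mpr ⟨h0, h⟩⟩
  have hpos0 : 1 ≤ n0 := by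
    rcases zmod2_cases (η L0) with h | h
    · exact Finset.card_pos.mpr ⟨L0, Finset.mem_filter.mpr ⟨h0, h⟩⟩
    · have h1' : η L1 = 0 := by
        rcases zmod2_cases (η L1) with h' | h'
        · exact h'
        · exact absurd (h.trans h'.symm) hne
      exact Finset.card_pos.mpr ⟨L1, Finset.mem_filter.mpr ⟨h1, h1'⟩⟩
  have hle : mult A p ≤ 5 := hmult p hmp
  have h2 : n1 = 2 ∧ n0 = 2 := by omega
  intro v
  rcases zmod2_cases v with h | h <;> subst h
  · exact h2.2
  · exact h2.1

lemma class_count (A : Finset (Set ProjPlane))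
    (hlines : ∀ L ∈ A, IsProjLine L)
    (hmult : ∀ p : ProjPlane, IsMultPoint A p → mult A p ≤ 5)
    (η : Set ProjPlane → ZMod 2) (hη : IsCocycle 2 A η)
    {L : Set ProjPlane} (hL : L ∈ A) :
    ∃ t, (A.filter fun K => η K ≠ η L).card = 2 * t ∧
      t + 1 ≤ (A.filter fun K => η K = η L).card := by
  set v := η L with hv
  set B := A.filter (fun K => η K ≠ v) with hB
  set φ : Set ProjPlane → ProjPlane := fun K =>
    if h : ∃! p : ProjPlane, p ∈ L ∧ p ∈ K then h.choose else Classical.arbitrary ProjPlane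
    with hφ
  have hBspec : ∀ K ∈ B, (φ K ∈ L ∧ φ K ∈ K) ∧ ∀ q : ProjPlane, q ∈ L → q ∈ K → q = φ K := by
    intro K hK
    obtain ⟨hKA, hKv⟩ := Finset.mem_filter.mp hK
    have hLK : L ≠ K := fun h => hKv (by rw [← h])
    have hEU := inter_unique (hlines L hL) (hlines K hKA) hLK
    rw [hφ]
    simp only [dif_pos hEU]
    exact ⟨hEU.choose_spec.1, fun q hq1 hq2 => hEU.choose_spec.2 q ⟨hq1, hq2⟩⟩
  set T := B.image φ with hT
  have hcardB : B.card = ∑ p ∈ T, (B.filter fun K => φ K = p).card :=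
    Finset.card_eq_sum_card_fiberwise (fun K hK => Finset.mem_image_of_mem φ hK)
  have hTmem : ∀ p ∈ T, p ∈ L ∧ L ∈ linesThrough A p ∧
      (∀ w : ZMod 2, ((linesThrough A p).filter fun K => η K = w).card = 2) := by
    intro p hp
    obtain ⟨K0, hK0, rfl⟩ := Finset.mem_image.mp hp
    obtain ⟨⟨hpL, hpK0⟩, _⟩ := hBspec K0 hK0
    obtain ⟨hK0A, hK0v⟩ := Finset.mem_filter.mp hK0
    have hLin : L ∈ linesThrough A (φ K0) := Finset.mem_filter.mpr ⟨hL, hpL⟩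
    have hKin : K0 ∈ linesThrough A (φ K0) := Finset.mem_filter.mpr ⟨hK0A, hpK0⟩
    exact ⟨hpL, hLin, mixed_point A hmult η hη hLin hKin (fun h => hK0v (h.symm.trans hv.symm))⟩
  have hfiber : ∀ p ∈ T, (B.filter fun K => φ K = p).card = 2 := by
    intro p hp
    obtain ⟨hpL, hLin, hcount⟩ := hTmem p hp
    have hset : (B.filter fun K => φ K = p) =
        (linesThrough A p).filter (fun K => η K = v + 1) := by
      ext K
      simp only [Finset.mem_filter, hB, linesThrough]
      constructor
      · rintro ⟨⟨hKA, hKv⟩, hφK⟩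
        obtain ⟨⟨_, hpK⟩, _⟩ := hBspec K (Finset.mem_filter.mpr ⟨hKA, hKv⟩)
        exact ⟨⟨hKA, hφK ▸ hpK⟩, (zmod2_ne_iff _ _).mp hKv⟩
      · rintro ⟨⟨hKA, hpK⟩, hKv⟩
        have hKv' : η K ≠ v := (zmod2_ne_iff _ _).mpr hKv
        obtain ⟨_, huniq⟩ := hBspec K (Finset.mem_filter.mpr ⟨hKA, hKv'⟩)
        exact ⟨⟨hKA, hKv'⟩, (huniq p hpL hpK).symm⟩
    rw [hset, hcount (v + 1)]
  have hB2 : B.card = 2 * T.card := by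
    rw [hcardB, Finset.sum_congr rfl hfiber]
    simp [mul_comm]
  -- injection from T into (A.filter (η = v)).erase L
  have hψ : ∀ p ∈ T, ∃ M, M ∈ ((A.filter fun K => η K = v).erase L) ∧ p ∈ M := by
    intro p hp
    obtain ⟨hpL, hLin, hcount⟩ := hTmem p hp
    have hLmem : L ∈ (linesThrough A p).filter (fun K => η K = v) :=
      Finset.mem_filter.mpr ⟨hLin, hv.symm⟩
    have h2 : 1 < ((linesThrough A p).filter (fun K => η K = v)).card := by
      rw [hcount v]; norm_num
    obtain ⟨M, hM, hML⟩ := Finset.exists_mem_ne h2 L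
    obtain ⟨hMlt, hMv⟩ := Finset.mem_filter.mp hM
    obtain ⟨hMA, hpM⟩ := Finset.mem_filter.mp hMlt
    exact ⟨M, Finset.mem_erase.mpr ⟨hML, Finset.mem_filter.mpr ⟨hMA, hMv⟩⟩, hpM⟩
  set ψ : ProjPlane → Set ProjPlane := fun p =>
    if h : ∃ M, M ∈ ((A.filter fun K => η K = v).erase L) ∧ p ∈ M then h.choose else L
    with hψdef
  have hψspec : ∀ p ∈ T, ψ p ∈ ((A.filter fun K => η K = v).erase L) ∧ p ∈ ψ p := by
    intro p hp
    rw [hψdef]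
    simp only [dif_pos (hψ p hp)]
    exact (hψ p hp).choose_spec
  have hinj : Set.InjOn ψ ↑T := by
    intro p hp q hq hpq
    obtain ⟨hM1, hpM⟩ := hψspec p hp
    obtain ⟨hM2, hqM⟩ := hψspec q hq
    obtain ⟨hMne, hMmem⟩ := Finset.mem_erase.mp hM1
    have hMA : ψ p ∈ A := (Finset.mem_filter.mp hMmem).1
    have hEU := inter_unique (hlines L hL) (hlines (ψ p) hMA) (Ne.symm hMne)
    have hpL := (hTmem p hp).1
    have hqL := (hTmem q hq).1
    rw [← hpq] at hqM
    exact (hEU.unique ⟨hpL, hpM⟩ ⟨hqL, hqM⟩)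
  have hTle : T.card ≤ ((A.filter fun K => η K = v).erase L).card :=
    Finset.card_le_card_of_injOn ψ (fun p hp => (hψspec p hp).1) hinj
  have hLfil : L ∈ A.filter fun K => η K = v := Finset.mem_filter.mpr ⟨hL, hv.symm⟩
  have herase := Finset.card_erase_of_mem hLfil
  have hpos : 1 ≤ (A.filter fun K => η K = v).card := Finset.card_pos.mpr ⟨L, hLfil⟩
  exact ⟨T.card, hB2, by omega⟩


/-- if an arrangement of 12 lines with points of multiplicity at most 5
admits a non-constant 2-cocycle `η`, then `η` takes each of the two values of `F₂` on
exactly 6 lines. -/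
theorem statement12 (A : Finset (Set ProjPlane))
    (hlines : ∀ L ∈ A, IsProjLine L) (hcard : A.card = 12)
    (hmult : ∀ p : ProjPlane, IsMultPoint A p → mult A p ≤ 5)
    (η : Set ProjPlane → ZMod 2) (hη : IsCocycle 2 A η) (hnc : NonConstant A η) :
    ∀ v : ZMod 2, (A.filter fun L => η L = v).card = 6 := by
  obtain ⟨L, hLA, K, hKA, hLK⟩ := hnc
  have hflt : (A.filter fun K' => η K' = 0) = (A.filter fun K' => ¬ η K' = 1) :=
    Finset.filter_congr (fun x _ => zmod2_eq0_iff (η x))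
  have hab : (A.filter fun K' => η K' = 1).card + (A.filter fun K' => η K' = 0).card = 12 := by
    rw [hflt, Finset.card_filter_add_card_filter_not (fun K' => η K' = 1), hcard]
  obtain ⟨t, htB, htA⟩ := class_count A hlines hmult η hη hLA
  obtain ⟨s, hsB, hsA⟩ := class_count A hlines hmult η hη hKA
  have hne' : ∀ w : ZMod 2, (A.filter fun K' => η K' ≠ w) = (A.filter fun K' => η K' = w + 1) :=
    fun w => Finset.filter_congr (fun x _ => zmod2_ne_iff (η x) w)
  have h01 : (0 : ZMod 2) + 1 = 1 := by decide
  have h11 : (1 : ZMod 2) + 1 = 0 := by decide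
  rcases zmod2_cases (η L) with h | h
  · have hK1 : η K = 1 := by
      rcases zmod2_cases (η K) with h' | h'
      · exact absurd (h.trans h'.symm) hLK
      · exact h'
    rw [h] at htB htA
    rw [hne' 0, h01] at htB
    rw [hK1] at hsB hsA
    rw [hne' 1, h11] at hsB
    intro v
    rcases zmod2_cases v with hv | hv <;> rw [hv] <;> omega
  · have hK0 : η K = 0 := by
      rcases zmod2_cases (η K) with h' | h'
      · exact h'
      · exact absurd (h.trans h'.symm) hLK
    rw [h] at htB htA
    rw [hne' 1, h11] at htB
    rw [hK0] at hsB hsA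
    rw [hne' 0, h01] at hsB
    intro v
    rcases zmod2_cases v with hv | hv <;> rw [hv] <;> omega
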